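/- arXiv:2510.00854 — 5 statements merged into one kernel-verified Lean document; each statement's English description precedes it below -/
import Mathlib

section
/- Let M be a structure in a first-order language L and let φ be an L-formula with free variables indexed by Fin m ⊕ Fin n. Then φ has the order property in M if and only if there exist sequences a : ℕ → (Fin m → M) and b : ℕ → (Fin n → M) such that for every i, the formula φ holds of the assignment Sum.elim (a i) (b j) for all sufficiently large j, while for every j, the formula φ fails of Sum.elim (a i) (b j) for all sufficiently large i; that is, if and only if there are sequences for which the two iterated limits of the truth values of φ(a i, b j) exist and are different. -/
open FirstOrder FirstOrder.Language Filter

/-- An `L`-formula `φ` with free variables in `Fin m ⊕ Fin n` has the order property in an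
`L`-structure `M` if there are sequences `a : ℕ → (Fin m → M)` and `b : ℕ → (Fin n → M)`
such that `φ(a i, b j)` holds iff `i ≤ j`. -/
def HasOrderProperty {L : FirstOrder.Language.{u, v}} {m n : ℕ}
    (φ : L.Formula (Fin m ⊕ Fin n)) (M : Type w) [L.Structure M] : Prop :=
  ∃ (a : ℕ → Fin m → M) (b : ℕ → Fin n → M),
    ∀ i j : ℕ, φ.Realize (Sum.elim (a i) (b j)) ↔ i ≤ j

/-- `φ` has the order property in `M` if and only if there exist sequences `a`, `b` such
that for every `i`, `φ(a i, b j)` holds for all sufficiently large `j`, while for every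
`j`, `φ(a i, b j)` fails for all sufficiently large `i`; i.e. iff the two iterated limits
of the truth values of `φ(a i, b j)` exist and are different. -/
theorem hasOrderProperty_iff_iterated_limits {L : FirstOrder.Language.{u, v}} {m n : ℕ}
    (φ : L.Formula (Fin m ⊕ Fin n)) (M : Type w) [L.Structure M] :
    HasOrderProperty φ M ↔
      ∃ (a : ℕ → Fin m → M) (b : ℕ → Fin n → M),
        (∀ i : ℕ, ∀ᶠ j in atTop, φ.Realize (Sum.elim (a i) (b j))) ∧
        (∀ j : ℕ, ∀ᶠ i in atTop, ¬ φ.Realize (Sum.elim (a i) (b j))) := by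
  constructor
  · rintro ⟨a, b, h⟩
    exact ⟨a, b, fun i => eventually_atTop.2 ⟨i, fun j hj => (h i j).2 hj⟩,
      fun j => eventually_atTop.2 ⟨j + 1, fun i hi hr => absurd ((h i j).1 hr) (by omega)⟩⟩
  · rintro ⟨a, b, ha, hb⟩
    choose Na hNa using fun i => eventually_atTop.1 (ha i)
    choose Nb hNb using fun j => eventually_atTop.1 (hb j)
    let F : ℕ → ℕ × ℕ := fun k => Nat.rec ((0 : ℕ), Na 0)
      (fun _ p => (max p.1 (Nb p.2), max p.2 (Na (max p.1 (Nb p.2))))) k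
    set f : ℕ → ℕ := fun k => (F k).1 with hfdef
    set g : ℕ → ℕ := fun k => (F k).2 with hgdef
    have hFsucc : ∀ k, F (k + 1) =
        (max (F k).1 (Nb (F k).2), max (F k).2 (Na (max (F k).1 (Nb (F k).2)))) :=
      fun k => rfl
    have hf1 : ∀ k, f k ≤ f (k + 1) := fun k => le_max_left _ _
    have hg1 : ∀ k, g k ≤ g (k + 1) := fun k => le_max_left _ _
    have hf : ∀ k, ∀ l < k, Nb (g l) ≤ f k := by
      intro k
      induction k with
      | zero => omega
      | succ k ih =>
        intro l hl
        rcases Nat.lt_succ_iff_lt_or_eq.1 hl with h' | h'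
        · exact le_trans (ih l h') (hf1 k)
        · subst h'
          exact le_max_right _ _
    have hg : ∀ k, ∀ l ≤ k, Na (f l) ≤ g k := by
      intro k
      induction k with
      | zero =>
        intro l hl
        interval_cases l
        exact le_of_eq rfl
      | succ k ih =>
        intro l hl
        rcases Nat.le_succ_iff.1 hl with h' | h'
        · exact le_trans (ih l h') (hg1 k)
        · subst h'
          exact le_max_right _ _
    refine ⟨fun i => a (f i), fun j => b (g j), fun i j => ⟨?_, ?_⟩⟩
    · intro hr
      by_contra hij
      push_neg at hij
      exact hNb (g j) (f i) (hf i j hij) hr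
    · intro hij
      exact hNa (f i) (g j) (hg j i hij)
end

section
/- For every n and all tuples a, b : Fin n → ℂ, there exists a ring automorphism σ : ℂ ≃+* ℂ with σ (a i) = b i for every i if and only if a and b have the same vanishing ideal over ℚ, i.e. for every polynomial P ∈ MvPolynomial (Fin n) ℚ one has aeval a P = 0 if and only if aeval b P = 0. (The orbits of the diagonal action of Aut(ℂ/ℚ) on ℂⁿ are exactly the sets of generic points of the ℚ-irreducible Zariski-closed subvarieties of ℂⁿ.) -/
set_option maxHeartbeats 4000000
set_option synthInstance.maxHeartbeats 200000

open Cardinal in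
/-- Any ring isomorphism between countable subrings of `ℂ` extends to a ring
automorphism of `ℂ`. -/
lemma extend_to_ringAut (Sa Sb : Subring ℂ) [Countable Sa] [Countable Sb]
    (e : Sa ≃+* Sb) : ∃ σ : ℂ ≃+* ℂ, ∀ x : Sa, σ x = e x := by
  obtain ⟨s, hs⟩ := exists_isTranscendenceBasis (Sa : Type) ℂ
  obtain ⟨t, ht⟩ := exists_isTranscendenceBasis (Sb : Type) ℂ
  have hC : (ℵ₀ : Cardinal) < #ℂ := by
    rw [mk_complex]; exact Cardinal.aleph0_lt_continuum
  have hst : #s = #t := by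
    rw [← IsAlgClosed.cardinal_eq_cardinal_transcendence_basis_of_aleph0_lt' _ hs
      Cardinal.mk_le_aleph0 hC,
      ← IsAlgClosed.cardinal_eq_cardinal_transcendence_basis_of_aleph0_lt' _ ht
      Cardinal.mk_le_aleph0 hC]
  obtain ⟨e'⟩ := Cardinal.eq.1 hst
  set S := Algebra.adjoin Sa (Set.range ((↑) : s → ℂ))
  set T := Algebra.adjoin Sb (Set.range ((↑) : t → ℂ))
  let E : (S : Type) ≃+* (T : Type) :=
    hs.1.aevalEquiv.toRingEquiv.symm.trans
      (((MvPolynomial.mapEquiv s e).trans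
        (MvPolynomial.renameEquiv Sb e').toRingEquiv).trans ht.1.aevalEquiv.toRingEquiv)
  haveI : NoZeroSMulDivisors (S : Type) ℂ :=
    ⟨fun {c x} h => by
      rw [Algebra.smul_def, mul_eq_zero] at h
      exact h.imp_left (fun h' => Subtype.val_injective h')⟩
  haveI : NoZeroSMulDivisors (T : Type) ℂ :=
    ⟨fun {c x} h => by
      rw [Algebra.smul_def, mul_eq_zero] at h
      exact h.imp_left (fun h' => Subtype.val_injective h')⟩
  haveI : IsAlgClosure (S : Type) ℂ :=
    IsAlgClosed.isAlgClosure_of_transcendence_basis _ hs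
  haveI : IsAlgClosure (T : Type) ℂ :=
    IsAlgClosed.isAlgClosure_of_transcendence_basis _ ht
  refine ⟨IsAlgClosure.equivOfEquiv ℂ ℂ E, fun x => ?_⟩
  have hx : (x : ℂ) = algebraMap S ℂ (algebraMap Sa S x) := rfl
  have hE : E (algebraMap Sa S x) = algebraMap Sb T (e x) := by
    show ht.1.aevalEquiv ((MvPolynomial.renameEquiv Sb e')
        ((MvPolynomial.mapEquiv s e) (hs.1.aevalEquiv.symm (algebraMap Sa S x)))) = _
    have h1 : hs.1.aevalEquiv.symm (algebraMap Sa S x) = MvPolynomial.C x := by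
      rw [AlgEquiv.symm_apply_eq, ← MvPolynomial.algebraMap_eq, AlgEquiv.commutes]
    rw [h1, MvPolynomial.mapEquiv_apply, MvPolynomial.map_C, MvPolynomial.renameEquiv_apply,
      MvPolynomial.rename_C, ← MvPolynomial.algebraMap_eq, AlgEquiv.commutes]
    rfl
  rw [hx, IsAlgClosure.equivOfEquiv_algebraMap, hE]
  rfl

/-- Two `n`-tuples of complex numbers are in the same orbit of the diagonal action of the
automorphism group of `ℂ` if and only if they have the same vanishing ideal over `ℚ`:
there is a ring automorphism `σ` of `ℂ` with `σ (a i) = b i` for all `i` iff for every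
polynomial `P` over `ℚ`, `P(a) = 0` iff `P(b) = 0`. -/
theorem exists_ringAut_map_eq_iff_vanishing_ideal_eq (n : ℕ) (a b : Fin n → ℂ) :
    (∃ σ : ℂ ≃+* ℂ, ∀ i, σ (a i) = b i) ↔
      ∀ P : MvPolynomial (Fin n) ℚ,
        MvPolynomial.aeval a P = 0 ↔ MvPolynomial.aeval b P = 0 := by
  constructor
  · rintro ⟨σ, hσ⟩ P
    have key : σ (MvPolynomial.aeval a P) = MvPolynomial.aeval b P := by
      have h2 := MvPolynomial.comp_aeval_apply (f := a) (σ : ℂ →+* ℂ).toRatAlgHom P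
      have h3 : (fun i => (σ : ℂ →+* ℂ).toRatAlgHom (a i)) = b := funext fun i => hσ i
      rw [h3] at h2
      exact h2
    rw [← key]
    exact ⟨fun h => by rw [h, map_zero], fun h => σ.injective (by rwa [map_zero])⟩
  · intro h
    set f := ((MvPolynomial.aeval a : MvPolynomial (Fin n) ℚ →ₐ[ℚ] ℂ) : MvPolynomial (Fin n) ℚ →+* ℂ)
    set g := ((MvPolynomial.aeval b : MvPolynomial (Fin n) ℚ →ₐ[ℚ] ℂ) : MvPolynomial (Fin n) ℚ →+* ℂ)
    have hker : RingHom.ker f = RingHom.ker g := by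
      ext P
      simp only [RingHom.mem_ker]
      exact h P
    have qf := RingHom.quotientKerEquivRange f
    have qg := RingHom.quotientKerEquivRange g
    set e : (f.range : Type) ≃+* (g.range : Type) :=
      (RingHom.quotientKerEquivRange f).symm.trans
        ((Ideal.quotEquivOfEq hker).trans (RingHom.quotientKerEquivRange g))
    have hqf : ∀ P, RingHom.quotientKerEquivRange f (Ideal.Quotient.mk _ P) =
        f.rangeRestrict P := by
      intro P
      simp [RingHom.quotientKerEquivRange, RingHom.quotientKerEquivOfSurjective]
    have hqg : ∀ P, RingHom.quotientKerEquivRange g (Ideal.Quotient.mk _ P) =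
        g.rangeRestrict P := by
      intro P
      simp [RingHom.quotientKerEquivRange, RingHom.quotientKerEquivOfSurjective]
    have he : ∀ P, e (f.rangeRestrict P) = g.rangeRestrict P := fun P => by
      simp only [e, RingEquiv.trans_apply]
      rw [← hqf P, RingEquiv.symm_apply_apply, Ideal.quotEquivOfEq_mk, hqg]
    haveI : Countable (MvPolynomial (Fin n) ℚ) :=
      Function.Injective.countable (f := AddMonoidAlgebra.coeff) fun _ _ h => AddMonoidAlgebra.coeff_inj.1 h
    haveI : Countable f.range := by
      have : (Set.range ⇑f).Countable := Set.countable_range _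
      exact this.to_subtype
    haveI : Countable g.range := by
      have : (Set.range ⇑g).Countable := Set.countable_range _
      exact this.to_subtype
    obtain ⟨σ, hσ⟩ := extend_to_ringAut f.range g.range e
    refine ⟨σ, fun i => ?_⟩
    have ha : a i = (f.rangeRestrict (MvPolynomial.X i) : ℂ) := by simp [f]
    have hb : b i = (g.rangeRestrict (MvPolynomial.X i) : ℂ) := by simp [g]
    rw [ha, hσ, he, ← hb]
end

section
/- For every n, the quotient of the set of tuples Fin n → ℂ by the equivalence relation identifying a and b whenever there exists a ring automorphism σ : ℂ ≃+* ℂ with σ (a i) = b i for every i, is countable. (The first-order theory of algebraically closed fields of characteristic 0 has only countably many complete types in each finite set of variables.) -/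
open Cardinal

/-- Variant of `IsAlgClosed.equivOfTranscendenceBasis` recording that the equivalence
commutes with the algebra maps from `R`. -/
theorem exists_ringEquiv_of_transcendenceBasis {R K L ι κ : Type} [CommRing R] [Field K]
    [Field L] [Algebra R K] [Algebra R L] [IsAlgClosed K] [IsAlgClosed L]
    {v : ι → K} {w : κ → L} (e : ι ≃ κ)
    (hv : IsTranscendenceBasis R v) (hw : IsTranscendenceBasis R w) :
    ∃ σ : K ≃+* L, ∀ r, σ (algebraMap R K r) = algebraMap R L r := by
  letI := IsAlgClosed.isAlgClosure_of_transcendence_basis v hv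
  letI := IsAlgClosed.isAlgClosure_of_transcendence_basis w hw
  let he : Algebra.adjoin R (Set.range v) ≃ₐ[R] Algebra.adjoin R (Set.range w) :=
    hv.1.aevalEquiv.symm.trans ((MvPolynomial.renameEquiv R e).trans hw.1.aevalEquiv)
  refine ⟨IsAlgClosure.equivOfEquiv K L he.toRingEquiv, fun r => ?_⟩
  rw [IsScalarTower.algebraMap_apply R (Algebra.adjoin R (Set.range v)) K,
    IsAlgClosure.equivOfEquiv_algebraMap]
  have : he.toRingEquiv (algebraMap R (Algebra.adjoin R (Set.range v)) r)
      = algebraMap R (Algebra.adjoin R (Set.range w)) r := he.commutes r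
  rw [this, ← IsScalarTower.algebraMap_apply]

/-- Two injective embeddings of a countable ring into uncountable algebraically closed
fields of the same cardinality are conjugate by an isomorphism of the fields. -/
theorem exists_ringEquiv_comm {R K L : Type} [CommRing R] [Countable R] [Field K] [Field L]
    [IsAlgClosed K] [IsAlgClosed L] [Algebra R K] [Algebra R L]
    (hK : ℵ₀ < #K) (hKL : #K = #L)
    (hiK : Function.Injective (algebraMap R K))
    (hiL : Function.Injective (algebraMap R L)) :
    ∃ σ : K ≃+* L, ∀ r, σ (algebraMap R K r) = algebraMap R L r := by
  haveI : Nontrivial R := (algebraMap R K).domain_nontrivial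
  haveI : FaithfulSMul R K := (faithfulSMul_iff_algebraMap_injective (R := R) (A := K)).2 hiK
  haveI : FaithfulSMul R L := (faithfulSMul_iff_algebraMap_injective (R := R) (A := L)).2 hiL
  obtain ⟨s, hs⟩ := exists_isTranscendenceBasis R K
  obtain ⟨t, ht⟩ := exists_isTranscendenceBasis R L
  have hR : #R ≤ ℵ₀ := Cardinal.mk_le_aleph0
  have hst : #s = #t := by
    rw [← IsAlgClosed.cardinal_eq_cardinal_transcendence_basis_of_aleph0_lt' _ hs hR hK,
      ← IsAlgClosed.cardinal_eq_cardinal_transcendence_basis_of_aleph0_lt' _ ht hR (hKL ▸ hK),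
      hKL]
  obtain ⟨e⟩ := Cardinal.eq.1 hst
  exact exists_ringEquiv_of_transcendenceBasis e hs ht

/-- The quotient of the set of `n`-tuples of complex numbers by the orbit equivalence
relation of the diagonal action of the automorphism group of `ℂ` (identifying `a` and `b`
whenever some ring automorphism `σ` of `ℂ` satisfies `σ (a i) = b i` for all `i`) is
countable: `ACF₀` has only countably many complete types in each finite set of
variables. -/
theorem countable_quot_ringAut_orbits (n : ℕ) :
    Countable (Quot fun a b : Fin n → ℂ => ∃ σ : ℂ ≃+* ℂ, ∀ i, σ (a i) = b i) := by
  classical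
  set Rn := MvPolynomial (Fin n) ℚ with hRn
  -- the invariant: vanishing ideal over ℚ
  let F : (Fin n → ℂ) → Ideal Rn := fun a => RingHom.ker (MvPolynomial.aeval a).toRingHom
  -- ring automorphisms fix ℚ, so the invariant descends to the quotient
  have hcomp : ∀ (a : Fin n → ℂ) (σ : ℂ ≃+* ℂ) (p : Rn),
      σ (MvPolynomial.aeval a p) = MvPolynomial.aeval (fun i => σ (a i)) p := by
    intro a σ p
    induction p using MvPolynomial.induction_on with
    | C q => simp [MvPolynomial.aeval_C, map_ratCast]
    | add p q hp hq => simp [map_add, hp, hq]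
    | mul_X p i hp => simp [map_mul, hp]
  have hsound : ∀ a b : Fin n → ℂ, (∃ σ : ℂ ≃+* ℂ, ∀ i, σ (a i) = b i) → F a = F b := by
    rintro a b ⟨σ, hσ⟩
    ext p
    have hb : (fun i => σ (a i)) = b := funext hσ
    simp only [F, RingHom.mem_ker, AlgHom.toRingHom_eq_coe, RingHom.coe_coe]
    constructor
    · intro h
      rw [← hb, ← hcomp, h, map_zero]
    · intro h
      have h2 : σ ((MvPolynomial.aeval a) p) = 0 := by rw [hcomp, hb, h]
      simpa using congrArg σ.symm h2
  haveI : Countable Rn := by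
    show Countable (MvPolynomial (Fin n) ℚ)
    delta MvPolynomial AddMonoidAlgebra
    exact Function.Injective.countable (f := AddMonoidAlgebra.coeff) fun x y h => by
      simpa only [AddMonoidAlgebra.ofCoeff_coeff] using congrArg AddMonoidAlgebra.ofCoeff h
  -- equal invariants imply the tuples are conjugate
  have hinj : ∀ a b : Fin n → ℂ, F a = F b → ∃ σ : ℂ ≃+* ℂ, ∀ i, σ (a i) = b i := by
    intro a b h
    set fa := (MvPolynomial.aeval a : Rn →ₐ[ℚ] ℂ).toRingHom with hfa
    set fb := (MvPolynomial.aeval b : Rn →ₐ[ℚ] ℂ).toRingHom with hfb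
    have hker : RingHom.ker fa = RingHom.ker fb := h
    set Q := Rn ⧸ RingHom.ker fa with hQ
    let gK : Q →+* ℂ := RingHom.kerLift fa
    let gL : Q →+* ℂ := Ideal.Quotient.lift (RingHom.ker fa) fb
      (fun x hx => RingHom.mem_ker.mp (hker ▸ hx))
    have hgK : Function.Injective gK := RingHom.kerLift_injective fa
    have hgL : Function.Injective gL := by
      refine RingHom.lift_injective_of_ker_le_ideal _ _ ?_
      rw [← hker]
    haveI : Countable Q := (Ideal.Quotient.mk (RingHom.ker fa)).surjective.countable
    letI algK : Algebra Q ℂ := gK.toAlgebra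
    letI algL : Algebra Q ℂ := gL.toAlgebra
    have hcard : ℵ₀ < #ℂ := by
      rw [mk_complex]; exact aleph0_lt_continuum
    obtain ⟨σ, hσ⟩ := @exists_ringEquiv_comm Q ℂ ℂ _ _ _ _ _ _ algK algL hcard rfl hgK hgL
    refine ⟨σ, fun i => ?_⟩
    have h3 := hσ (Ideal.Quotient.mk (RingHom.ker fa) (MvPolynomial.X i))
    have h1 : gK (Ideal.Quotient.mk (RingHom.ker fa) (MvPolynomial.X i)) = a i := by
      show fa (MvPolynomial.X i) = a i
      simp [fa]
    have h2 : gL (Ideal.Quotient.mk (RingHom.ker fa) (MvPolynomial.X i)) = b i := by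
      show fb (MvPolynomial.X i) = b i
      simp [fb]
    rw [RingHom.algebraMap_toAlgebra, RingHom.algebraMap_toAlgebra, h1, h2] at h3
    exact h3
  -- countably many ideals in a countable Noetherian ring
  haveI : Countable (Ideal Rn) := by
    have hfg : ∀ I : Ideal Rn, ∃ s : Finset Rn, Ideal.span (↑s : Set Rn) = I :=
      fun I => IsNoetherian.noetherian I
    choose g hg using hfg
    exact Function.Injective.countable (f := g) fun I J hIJ => by rw [← hg I, ← hg J, hIJ]
  -- conclude
  have hG : Function.Injective (Quot.lift F hsound) := fun x y => by
    induction x using Quot.ind with | _ a =>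
    induction y using Quot.ind with | _ b =>
    exact fun h => Quot.sound (hinj a b h)
  exact hG.countable
end

section
/- For every n and every set S ⊆ (Fin n → ℂ) of n-tuples of complex numbers, S is definable without parameters in the first-order language of rings (with ℂ carrying its natural ring-language structure) if and only if S belongs to the Boolean algebra of subsets of Fin n → ℂ generated by the zero sets {x | aeval x P = 0} of polynomials P ∈ MvPolynomial (Fin n) ℤ; that is, the subsets of ℂⁿ definable without parameters are exactly the constructible sets defined over the prime field. -/
open FirstOrder FirstOrder.Language

/-- `ℂ` as a structure for the first-order language of rings, via its ring operations. -/
noncomputable instance : FirstOrder.Language.ring.Structure ℂ :=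
  (FirstOrder.Ring.compatibleRingOfRing ℂ).toStructure

/-- Membership in the Boolean algebra of subsets of `α` generated by a family `G` of
subsets: the closure of `G` under complements and (finite) unions, containing `univ`. -/
inductive MemBooleanAlgebraGen {α : Type*} (G : Set (Set α)) : Set α → Prop
  | basic {s : Set α} : s ∈ G → MemBooleanAlgebraGen G s
  | univ : MemBooleanAlgebraGen G Set.univ
  | compl {s : Set α} : MemBooleanAlgebraGen G s → MemBooleanAlgebraGen G sᶜ
  | union {s t : Set α} : MemBooleanAlgebraGen G s → MemBooleanAlgebraGen G t →
      MemBooleanAlgebraGen G (s ∪ t)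

noncomputable instance : FirstOrder.Ring.CompatibleRing ℂ :=
  { toStructure := (inferInstance : FirstOrder.Language.ring.Structure ℂ)
    funMap_add := fun _ => rfl
    funMap_mul := fun _ => rfl
    funMap_neg := fun _ => rfl
    funMap_zero := fun _ => rfl
    funMap_one := fun _ => rfl }

namespace QEproof

open MvPolynomial Polynomial

variable {ι κ : Type*}

def Con {ι : Type*} (S : Set (ι → ℂ)) : Prop :=
  MemBooleanAlgebraGen
    {t : Set (ι → ℂ) | ∃ P : MvPolynomial ι ℤ, t = {x | MvPolynomial.aeval x P = 0}} S

def ZSet (p : MvPolynomial ι ℤ) : Set (ι → ℂ) := {x | MvPolynomial.aeval x p = 0}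

lemma con_zset (p : MvPolynomial ι ℤ) : Con (ZSet p) := .basic ⟨p, rfl⟩

lemma con_univ : Con (Set.univ : Set (ι → ℂ)) := .univ

lemma Con.compl {S : Set (ι → ℂ)} (h : Con S) : Con Sᶜ := MemBooleanAlgebraGen.compl h

lemma Con.union {S T : Set (ι → ℂ)} (hS : Con S) (hT : Con T) : Con (S ∪ T) :=
  MemBooleanAlgebraGen.union hS hT

lemma con_empty : Con (∅ : Set (ι → ℂ)) := by
  have := con_univ (ι := ι) |>.compl
  simpa using this

lemma Con.inter {S T : Set (ι → ℂ)} (hS : Con S) (hT : Con T) : Con (S ∩ T) := by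
  have := (hS.compl.union hT.compl).compl
  rwa [Set.compl_union, compl_compl, compl_compl] at this

/-- Evaluation of a one-variable polynomial over `MvPolynomial ι ℤ` at a point `x` of the
`ι`-coordinates, giving a polynomial over `ℂ`. -/
noncomputable def pev (x : ι → ℂ) (F : Polynomial (MvPolynomial ι ℤ)) : Polynomial ℂ :=
  F.map (MvPolynomial.aeval x : MvPolynomial ι ℤ →ₐ[ℤ] ℂ).toRingHom

@[simp] lemma pev_coeff (x : ι → ℂ) (F : Polynomial (MvPolynomial ι ℤ)) (j : ℕ) :
    (pev x F).coeff j = MvPolynomial.aeval x (F.coeff j) := coeff_map _ _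

@[simp] lemma pev_zero (x : ι → ℂ) : pev x 0 = 0 := Polynomial.map_zero _
@[simp] lemma pev_add (x : ι → ℂ) (F G) : pev x (F + G) = pev x F + pev x G :=
  Polynomial.map_add _
@[simp] lemma pev_sub (x : ι → ℂ) (F G) : pev x (F - G) = pev x F - pev x G :=
  Polynomial.map_sub _
@[simp] lemma pev_mul (x : ι → ℂ) (F G) : pev x (F * G) = pev x F * pev x G :=
  Polynomial.map_mul _
@[simp] lemma pev_pow (x : ι → ℂ) (F) (k : ℕ) : pev x (F ^ k) = pev x F ^ k :=
  Polynomial.map_pow _ _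
@[simp] lemma pev_C (x : ι → ℂ) (c : MvPolynomial ι ℤ) :
    pev x (Polynomial.C c) = Polynomial.C (MvPolynomial.aeval x c) := Polynomial.map_C _
@[simp] lemma pev_X (x : ι → ℂ) : pev x Polynomial.X = Polynomial.X := Polynomial.map_X _

lemma con_listZero (l : List (MvPolynomial ι ℤ)) :
    Con {x | ∀ p ∈ l, MvPolynomial.aeval x p = 0} := by
  induction l with
  | nil => simpa using con_univ (ι := ι)
  | cons p l ih =>
      have h : {x : ι → ℂ | ∀ q ∈ p :: l, MvPolynomial.aeval x q = 0}
          = ZSet p ∩ {x | ∀ q ∈ l, MvPolynomial.aeval x q = 0} := by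
        ext x; simp [ZSet]
      rw [h]
      exact (con_zset p).inter ih

lemma pev_eq_zero_iff (x : ι → ℂ) (F : Polynomial (MvPolynomial ι ℤ)) :
    pev x F = 0 ↔ ∀ j ∈ List.range (F.natDegree + 1), MvPolynomial.aeval x (F.coeff j) = 0 := by
  constructor
  · intro h j _
    have := congrArg (fun G => Polynomial.coeff G j) h
    simpa using this
  · intro h
    ext j
    simp only [pev_coeff, Polynomial.coeff_zero]
    rcases le_or_gt j F.natDegree with hj | hj
    · exact h j (List.mem_range.2 (Nat.lt_succ_of_le hj))
    · rw [Polynomial.coeff_eq_zero_of_natDegree_lt hj]; simp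

lemma con_pev_zero (F : Polynomial (MvPolynomial ι ℤ)) :
    Con {x : ι → ℂ | pev x F = 0} := by
  have h : {x : ι → ℂ | pev x F = 0}
      = {x | ∀ p ∈ (List.range (F.natDegree + 1)).map F.coeff, MvPolynomial.aeval x p = 0} := by
    ext x
    simp only [Set.mem_setOf_eq, pev_eq_zero_iff, List.mem_map, List.mem_range]
    constructor
    · rintro h p ⟨j, hj, rfl⟩; exact h j hj
    · intro h j hj; exact h _ ⟨j, hj, rfl⟩
  rw [h]
  exact con_listZero _


lemma con_pullback (f : ι → MvPolynomial κ ℤ) {S : Set (ι → ℂ)} (h : Con S) :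
    Con ((fun (x : κ → ℂ) (i : ι) => MvPolynomial.aeval x (f i)) ⁻¹' S) := by
  induction h with
  | @basic s hs =>
      obtain ⟨P, rfl⟩ := hs
      have : (fun (x : κ → ℂ) (i : ι) => MvPolynomial.aeval x (f i)) ⁻¹'
          {x | MvPolynomial.aeval x P = 0} = ZSet (MvPolynomial.bind₁ f P) := by
        ext x
        simp [ZSet, Set.mem_preimage, MvPolynomial.aeval_bind₁]
      rw [this]; exact con_zset _
  | univ => simpa using con_univ (ι := κ)
  | compl _ ih => rw [Set.preimage_compl]; exact ih.compl
  | union _ _ ih₁ ih₂ => rw [Set.preimage_union]; exact ih₁.union ih₂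

/-- A basic constructible "cell". -/
def cell (l : List (MvPolynomial ι ℤ)) (q : MvPolynomial ι ℤ) : Set (ι → ℂ) :=
  {x | (∀ p ∈ l, MvPolynomial.aeval x p = 0) ∧ MvPolynomial.aeval x q ≠ 0}

def ucells (L : List (List (MvPolynomial ι ℤ) × MvPolynomial ι ℤ)) : Set (ι → ℂ) :=
  L.foldr (fun c t => cell c.1 c.2 ∪ t) ∅

@[simp] lemma ucells_nil : ucells ([] : List (List (MvPolynomial ι ℤ) × MvPolynomial ι ℤ)) = ∅ :=
  rfl

@[simp] lemma ucells_cons (c) (L : List (List (MvPolynomial ι ℤ) × MvPolynomial ι ℤ)) :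
    ucells (c :: L) = cell c.1 c.2 ∪ ucells L := rfl

lemma mem_ucells {L : List (List (MvPolynomial ι ℤ) × MvPolynomial ι ℤ)} {x : ι → ℂ} :
    x ∈ ucells L ↔ ∃ c ∈ L, x ∈ cell c.1 c.2 := by
  induction L with
  | nil => simp
  | cons c L ih => simp [ih]

lemma ucells_append (L₁ L₂ : List (List (MvPolynomial ι ℤ) × MvPolynomial ι ℤ)) :
    ucells (L₁ ++ L₂) = ucells L₁ ∪ ucells L₂ := by
  ext x; simp [mem_ucells, or_and_right, exists_or]

lemma con_cell (l : List (MvPolynomial ι ℤ)) (q : MvPolynomial ι ℤ) : Con (cell l q) := by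
  have : cell l q = {x | ∀ p ∈ l, MvPolynomial.aeval x p = 0} ∩ (ZSet q)ᶜ := by
    ext x; simp [cell, ZSet]
  rw [this]
  exact (con_listZero l).inter (con_zset q).compl

lemma con_ucells (L : List (List (MvPolynomial ι ℤ) × MvPolynomial ι ℤ)) : Con (ucells L) := by
  induction L with
  | nil => simpa using con_empty (ι := ι)
  | cons c L ih => exact (con_cell c.1 c.2).union ih

lemma cell_inter_cell (l₁ l₂ : List (MvPolynomial ι ℤ)) (q₁ q₂ : MvPolynomial ι ℤ) :
    cell l₁ q₁ ∩ cell l₂ q₂ = cell (l₁ ++ l₂) (q₁ * q₂) := by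
  ext x
  simp only [cell, Set.mem_inter_iff, Set.mem_setOf_eq, List.mem_append, map_mul, mul_ne_zero_iff]
  constructor
  · rintro ⟨⟨h1, hq1⟩, ⟨h2, hq2⟩⟩
    exact ⟨fun p hp => hp.elim (h1 p) (h2 p), hq1, hq2⟩
  · rintro ⟨h, hq1, hq2⟩
    exact ⟨⟨fun p hp => h p (Or.inl hp), hq1⟩, fun p hp => h p (Or.inr hp), hq2⟩

lemma cell_inter_ucells (c : List (MvPolynomial ι ℤ) × MvPolynomial ι ℤ) (L) :
    cell c.1 c.2 ∩ ucells L = ucells (L.map fun c' => (c.1 ++ c'.1, c.2 * c'.2)) := by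
  induction L with
  | nil => simp
  | cons c' L ih =>
      simp only [ucells_cons, List.map_cons, Set.inter_union_distrib_left, ih,
        cell_inter_cell]

lemma exists_ucells_inter (L₁ L₂ : List (List (MvPolynomial ι ℤ) × MvPolynomial ι ℤ)) :
    ∃ L, ucells L₁ ∩ ucells L₂ = ucells L := by
  induction L₁ with
  | nil => exact ⟨[], by simp⟩
  | cons c L₁ ih =>
      obtain ⟨L, hL⟩ := ih
      refine ⟨(L₂.map fun c' => (c.1 ++ c'.1, c.2 * c'.2)) ++ L, ?_⟩
      rw [ucells_cons, Set.union_inter_distrib_right, hL, cell_inter_ucells, ucells_append]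

lemma cell_compl (l : List (MvPolynomial ι ℤ)) (q : MvPolynomial ι ℤ) :
    (cell l q)ᶜ = ucells ((l.map fun p => ([], p)) ++ [([q], 1)]) := by
  ext x
  simp only [Set.mem_compl_iff, cell, Set.mem_setOf_eq, not_and, not_not, mem_ucells,
    List.mem_append, List.mem_map, List.mem_singleton]
  constructor
  · intro h
    by_cases hq : MvPolynomial.aeval x q = 0
    · exact ⟨([q], 1), Or.inr rfl, by simp [cell, hq]⟩
    · have hnall : ¬ ∀ p ∈ l, MvPolynomial.aeval x p = 0 := fun hall => hq (h hall)
      push_neg at hnall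
      obtain ⟨p, hp, hp0⟩ := hnall
      exact ⟨([], p), Or.inl ⟨p, hp, rfl⟩, by simp [cell, hp0]⟩
  · rintro ⟨c, hc | hc, hcx⟩
    · obtain ⟨p, hp, rfl⟩ := hc
      intro hall
      exact absurd (hall p hp) hcx.2
    · subst hc
      intro _
      simpa [cell] using hcx.1

lemma exists_ucells_compl (L : List (List (MvPolynomial ι ℤ) × MvPolynomial ι ℤ)) :
    ∃ L', (ucells L)ᶜ = ucells L' := by
  induction L with
  | nil => exact ⟨[([], 1)], by ext x; simp [cell]⟩
  | cons c L ih =>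
      obtain ⟨L', hL'⟩ := ih
      obtain ⟨L'', hL''⟩ := exists_ucells_inter ((c.1.map fun p => ([], p)) ++ [([c.2], 1)]) L'
      refine ⟨L'', ?_⟩
      rw [ucells_cons, Set.compl_union, hL', cell_compl, hL'']

lemma Con.exists_ucells {S : Set (ι → ℂ)} (h : Con S) : ∃ L, S = ucells L := by
  induction h with
  | @basic s hs =>
      obtain ⟨P, rfl⟩ := hs
      exact ⟨[([P], 1)], by ext x; simp [cell]⟩
  | univ => exact ⟨[([], 1)], by ext x; simp [cell]⟩
  | compl _ ih => obtain ⟨L, rfl⟩ := ih; exact exists_ucells_compl L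
  | union _ _ ih₁ ih₂ =>
      obtain ⟨L₁, rfl⟩ := ih₁
      obtain ⟨L₂, rfl⟩ := ih₂
      exact ⟨L₁ ++ L₂, (ucells_append L₁ L₂).symm⟩

section Pointwise

lemma acf_key (p q : Polynomial ℂ) (hp : 0 < p.natDegree) :
    (∃ y, p.eval y = 0 ∧ q.eval y ≠ 0) ↔ ¬ p ∣ q ^ p.natDegree := by
  have hp0 : p ≠ 0 := fun h => by simp [h] at hp
  constructor
  · rintro ⟨y, h0, hq⟩ hdvd
    have := Polynomial.eval_eq_zero_of_dvd_of_eval_eq_zero hdvd h0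
    rw [Polynomial.eval_pow, pow_eq_zero_iff hp.ne'] at this
    exact hq this
  · intro h
    by_contra hne
    push_neg at hne
    apply h
    have hsplit : p = Polynomial.C p.leadingCoeff *
        (Multiset.map (fun a => Polynomial.X - Polynomial.C a) p.roots).prod :=
      (IsAlgClosed.splits p).eq_prod_roots
    have h1 : (Multiset.map (fun a => Polynomial.X - Polynomial.C a) p.roots).prod ∣
        q ^ p.natDegree := by
      have h2 : (Multiset.map (fun a => Polynomial.X - Polynomial.C a) p.roots).prod ∣
          (Multiset.map (fun _ => q) p.roots).prod :=
        Multiset.prod_dvd_prod_of_dvd _ _ (fun a ha =>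
          Polynomial.dvd_iff_isRoot.2 (hne a (Polynomial.isRoot_of_mem_roots ha)))
      rw [Multiset.map_const', Multiset.prod_replicate] at h2
      exact h2.trans (pow_dvd_pow q (Polynomial.card_roots' p))
    nth_rewrite 1 [hsplit]
    rwa [(isUnit_C.2 (Polynomial.leadingCoeff_ne_zero.2 hp0).isUnit).mul_left_dvd]

lemma inf_key (q : Polynomial ℂ) : (∃ y, q.eval y ≠ 0) ↔ q ≠ 0 := by
  constructor
  · rintro ⟨y, hy⟩ rfl; simp at hy
  · intro hq
    by_contra h
    push_neg at h
    exact hq (Polynomial.zero_of_eval_zero q h)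

end Pointwise

section Reduce

variable {A : Type*} [CommRing A] [Nontrivial A]

/-- The basic reduction step: cancel the top coefficient of `F` against `P`. -/
noncomputable def red (P F : Polynomial A) : Polynomial A :=
  Polynomial.C P.leadingCoeff * F -
    Polynomial.C F.leadingCoeff * Polynomial.X ^ (F.natDegree - P.natDegree) * P

lemma red_natDegree_le (P F : Polynomial A) (h : P.natDegree ≤ F.natDegree) :
    (red P F).natDegree ≤ F.natDegree := by
  refine le_trans (Polynomial.natDegree_sub_le _ _) (sup_le ?_ ?_)
  · exact Polynomial.natDegree_C_mul_le _ _
  · refine le_trans Polynomial.natDegree_mul_le ?_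
    have : (Polynomial.C F.leadingCoeff * Polynomial.X ^ (F.natDegree - P.natDegree)).natDegree
        ≤ F.natDegree - P.natDegree := by
      refine le_trans (Polynomial.natDegree_C_mul_le _ _) ?_
      simp
    omega

lemma red_coeff_top (P F : Polynomial A) (h : P.natDegree ≤ F.natDegree) :
    (red P F).coeff F.natDegree = 0 := by
  have harr : Polynomial.C F.leadingCoeff * Polynomial.X ^ (F.natDegree - P.natDegree) * P
      = Polynomial.C F.leadingCoeff * (Polynomial.X ^ (F.natDegree - P.natDegree) * P) := by
    ring
  rw [red, Polynomial.coeff_sub, Polynomial.coeff_C_mul, harr, Polynomial.coeff_C_mul]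
  have he : P.natDegree + (F.natDegree - P.natDegree) = F.natDegree := by omega
  have := Polynomial.coeff_X_pow_mul P (F.natDegree - P.natDegree) P.natDegree
  rw [he] at this
  rw [this]
  rw [Polynomial.coeff_natDegree, Polynomial.coeff_natDegree]
  ring

lemma red_zero_or_natDegree_lt (P F : Polynomial A) (h : P.natDegree ≤ F.natDegree)
    (hF : 0 < F.natDegree) : red P F = 0 ∨ (red P F).natDegree < F.natDegree := by
  by_cases h0 : red P F = 0
  · exact Or.inl h0
  · right
    rcases lt_or_eq_of_le (red_natDegree_le P F h) with hlt | heq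
    · exact hlt
    · exfalso
      have := red_coeff_top P F h
      rw [← heq, Polynomial.coeff_natDegree] at this
      exact h0 (Polynomial.leadingCoeff_eq_zero.1 this)

end Reduce

lemma pev_red (x : ι → ℂ) (P F : Polynomial (MvPolynomial ι ℤ)) :
    pev x (red P F) = Polynomial.C (MvPolynomial.aeval x P.leadingCoeff) * pev x F -
      Polynomial.C (MvPolynomial.aeval x F.leadingCoeff) *
        Polynomial.X ^ (F.natDegree - P.natDegree) * pev x P := by
  simp [red]

lemma pev_eraseLead (x : ι → ℂ) (F : Polynomial (MvPolynomial ι ℤ))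
    (h : MvPolynomial.aeval x F.leadingCoeff = 0) : pev x F = pev x F.eraseLead := by
  have h2 : pev x F = pev x F.eraseLead +
      Polynomial.C (MvPolynomial.aeval x F.leadingCoeff) * Polynomial.X ^ F.natDegree := by
    rw [← pev_C, ← pev_X x, ← pev_pow, ← pev_mul, ← pev_add,
      Polynomial.eraseLead_add_C_mul_X_pow]
  rw [h2, h]
  simp

lemma pev_P_ne_zero {x : ι → ℂ} {P : Polynomial (MvPolynomial ι ℤ)}
    (h : MvPolynomial.aeval x P.leadingCoeff ≠ 0) :
    pev x P ≠ 0 ∧ (pev x P).natDegree = P.natDegree := by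
  constructor
  · intro h0
    apply h
    have := congrArg (fun G => Polynomial.coeff G P.natDegree) h0
    simpa [Polynomial.coeff_natDegree] using this
  · exact Polynomial.natDegree_map_of_leadingCoeff_ne_zero _ h

open scoped Classical in
/-- measure for termination -/
noncomputable def μ (F : Polynomial (MvPolynomial ι ℤ)) : ℕ :=
  if F = 0 then 0 else F.natDegree + 1

lemma μ_le_of_natDegree_le {F : Polynomial (MvPolynomial ι ℤ)} {k : ℕ}
    (h : F = 0 ∨ F.natDegree < k) : μ F ≤ k := by
  classical
  rcases h with rfl | h
  · simp [μ]
  · rw [μ]; split <;> omega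

lemma μ_eraseLead_le {F : Polynomial (MvPolynomial ι ℤ)} (h : 0 < F.natDegree) :
    μ F.eraseLead ≤ F.natDegree := by
  refine μ_le_of_natDegree_le (Or.inr ?_)
  have := Polynomial.eraseLead_natDegree_le F
  omega

lemma μ_eraseLead_lt {F : Polynomial (MvPolynomial ι ℤ)} (h : F ≠ 0) :
    μ F.eraseLead < μ F := by
  classical
  have hμF : μ F = F.natDegree + 1 := by rw [μ]; simp [h]
  rcases Nat.eq_zero_or_pos F.natDegree with h0 | h0
  · obtain ⟨a, rfl⟩ := Polynomial.natDegree_eq_zero.1 h0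
    rw [Polynomial.eraseLead_C]
    have hz : μ (0 : Polynomial (MvPolynomial ι ℤ)) = 0 := by rw [μ]; simp
    omega
  · have h1 := μ_eraseLead_le h0
    omega

lemma conD (P : Polynomial (MvPolynomial ι ℤ)) :
    ∀ (N : ℕ) (F : Polynomial (MvPolynomial ι ℤ)), μ F ≤ N →
    ∃ W : Set (ι → ℂ), Con W ∧ ∀ x : ι → ℂ, MvPolynomial.aeval x P.leadingCoeff ≠ 0 →
      (x ∈ W ↔ pev x P ∣ pev x F) := by
  intro N
  induction N using Nat.strong_induction_on with
  | _ N ih =>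
    intro F hF
    classical
    by_cases hF0 : F = 0
    · subst hF0
      exact ⟨Set.univ, con_univ, fun x _ => by simp⟩
    by_cases hP0 : P.natDegree = 0
    · refine ⟨Set.univ, con_univ, fun x hx => ?_⟩
      simp only [Set.mem_univ, true_iff]
      obtain ⟨a, ha⟩ := Polynomial.natDegree_eq_zero.1 hP0
      have hpev : pev x P = Polynomial.C (MvPolynomial.aeval x a) := by rw [← ha]; simp
      have hla : P.leadingCoeff = a := by rw [← ha]; simp
      rw [hpev]
      exact (isUnit_C.2 (isUnit_iff_ne_zero.2 (hla ▸ hx))).dvd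
    have hμF : μ F = F.natDegree + 1 := by rw [μ]; simp [hF0]
    rcases lt_or_ge F.natDegree P.natDegree with hdeg | hdeg
    · refine ⟨{x | pev x F = 0}, con_pev_zero F, fun x hx => ?_⟩
      obtain ⟨hPne, hPdeg⟩ := pev_P_ne_zero hx
      simp only [Set.mem_setOf_eq]
      constructor
      · intro h; rw [h]; exact dvd_zero _
      · intro hdvd
        by_contra hne
        have h1 := Polynomial.natDegree_le_of_dvd hdvd hne
        have h2 : (pev x F).natDegree ≤ F.natDegree := Polynomial.natDegree_map_le
        omega
    · have hFpos : 0 < F.natDegree := lt_of_lt_of_le (Nat.pos_of_ne_zero hP0) hdeg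
      obtain ⟨W₁, hW₁c, hW₁⟩ := ih F.natDegree (by omega) F.eraseLead (μ_eraseLead_le hFpos)
      obtain ⟨W₂, hW₂c, hW₂⟩ := ih F.natDegree (by omega) (red P F)
        (μ_le_of_natDegree_le (red_zero_or_natDegree_lt P F hdeg hFpos))
      refine ⟨(W₁ ∩ ZSet F.leadingCoeff) ∪ (W₂ ∩ (ZSet F.leadingCoeff)ᶜ),
        (hW₁c.inter (con_zset _)).union (hW₂c.inter (con_zset _).compl), fun x hx => ?_⟩
      by_cases hc : MvPolynomial.aeval x F.leadingCoeff = 0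
      · have hmem : x ∈ (W₁ ∩ ZSet F.leadingCoeff) ∪ (W₂ ∩ (ZSet F.leadingCoeff)ᶜ)
            ↔ x ∈ W₁ := by simp [ZSet, hc]
        rw [hmem, hW₁ x hx, ← pev_eraseLead x F hc]
      · have hmem : x ∈ (W₁ ∩ ZSet F.leadingCoeff) ∪ (W₂ ∩ (ZSet F.leadingCoeff)ᶜ)
            ↔ x ∈ W₂ := by simp [ZSet, hc]
        rw [hmem, hW₂ x hx, pev_red]
        constructor
        · intro h
          have hring : Polynomial.C (MvPolynomial.aeval x P.leadingCoeff) * pev x F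
              = (Polynomial.C (MvPolynomial.aeval x P.leadingCoeff) * pev x F -
                  Polynomial.C (MvPolynomial.aeval x F.leadingCoeff) *
                    Polynomial.X ^ (F.natDegree - P.natDegree) * pev x P) +
                Polynomial.C (MvPolynomial.aeval x F.leadingCoeff) *
                    Polynomial.X ^ (F.natDegree - P.natDegree) * pev x P := by ring
          have h2 : pev x P ∣ Polynomial.C (MvPolynomial.aeval x P.leadingCoeff) * pev x F := by
            rw [hring]
            exact dvd_add h (dvd_mul_left _ _)
          rwa [(isUnit_C.2 (isUnit_iff_ne_zero.2 hx)).dvd_mul_left] at h2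
        · intro h
          exact dvd_sub (h.mul_left _) (dvd_mul_left _ _)

/-- The projection of a basic cell in one more variable. -/
def Tset (Ps : List (Polynomial (MvPolynomial ι ℤ))) (Q : Polynomial (MvPolynomial ι ℤ)) :
    Set (ι → ℂ) :=
  {x | ∃ y : ℂ, (∀ P ∈ Ps, Polynomial.eval y (pev x P) = 0) ∧ Polynomial.eval y (pev x Q) ≠ 0}

lemma Tset_congr {Ps Ps' : List (Polynomial (MvPolynomial ι ℤ))}
    (h : ∀ p, p ∈ Ps ↔ p ∈ Ps') (Q : Polynomial (MvPolynomial ι ℤ)) :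
    Tset Ps Q = Tset Ps' Q := by
  ext x
  constructor <;> rintro ⟨y, h1, h2⟩
  · exact ⟨y, fun P hP => h1 P ((h P).2 hP), h2⟩
  · exact ⟨y, fun P hP => h1 P ((h P).1 hP), h2⟩

noncomputable def ν (Ps : List (Polynomial (MvPolynomial ι ℤ))) : ℕ :=
  (Ps.map μ).sum + Ps.length

lemma ν_perm {Ps Ps' : List (Polynomial (MvPolynomial ι ℤ))} (h : Ps.Perm Ps') :
    ν Ps = ν Ps' := by
  rw [ν, ν, (h.map μ).sum_eq, h.length_eq]

lemma ν_cons (P : Polynomial (MvPolynomial ι ℤ)) (Ps : List (Polynomial (MvPolynomial ι ℤ))) :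
    ν (P :: Ps) = μ P + ν Ps + 1 := by
  simp [ν, List.map_cons, List.sum_cons]
  omega

lemma exists_min_natDegree (l : List (Polynomial (MvPolynomial ι ℤ))) (h : l ≠ []) :
    ∃ p ∈ l, ∀ q ∈ l, p.natDegree ≤ q.natDegree := by
  induction l with
  | nil => simp at h
  | cons a l ih =>
      rcases eq_or_ne l [] with rfl | hl
      · exact ⟨a, by simp, by simp⟩
      · obtain ⟨p, hp, hmin⟩ := ih hl
        rcases le_total a.natDegree p.natDegree with hle | hle
        · refine ⟨a, List.mem_cons_self, ?_⟩
          intro q hq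
          rcases List.mem_cons.1 hq with rfl | hq
          · exact le_rfl
          · exact hle.trans (hmin q hq)
        · refine ⟨p, List.mem_cons_of_mem _ hp, ?_⟩
          intro q hq
          rcases List.mem_cons.1 hq with rfl | hq
          · exact hle
          · exact hmin q hq

lemma red_eval_equiv (x : ι → ℂ) (P₁ P₂ : Polynomial (MvPolynomial ι ℤ)) (y : ℂ)
    (hc : MvPolynomial.aeval x P₁.leadingCoeff ≠ 0)
    (h1 : Polynomial.eval y (pev x P₁) = 0) :
    Polynomial.eval y (pev x P₂) = 0 ↔ Polynomial.eval y (pev x (red P₁ P₂)) = 0 := by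
  rw [pev_red]
  simp only [Polynomial.eval_sub, Polynomial.eval_mul, Polynomial.eval_pow, Polynomial.eval_C,
    Polynomial.eval_X, h1, mul_zero, sub_zero]
  rw [mul_eq_zero]
  constructor
  · exact fun h => Or.inr h
  · rintro (h | h)
    · exact absurd h hc
    · exact h

lemma conE : ∀ (N : ℕ) (Ps : List (Polynomial (MvPolynomial ι ℤ)))
    (Q : Polynomial (MvPolynomial ι ℤ)), ν Ps ≤ N → Con (Tset Ps Q) := by
  intro N
  induction N using Nat.strong_induction_on with
  | _ N ih =>
  intro Ps Q hν
  classical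
  rcases eq_or_ne Ps [] with rfl | hPs
  · have hbase : Tset ([] : List (Polynomial (MvPolynomial ι ℤ))) Q = {x | pev x Q = 0}ᶜ := by
      ext x
      simp only [Tset, List.not_mem_nil, false_implies, implies_true, true_and,
        Set.mem_setOf_eq, Set.mem_compl_iff]
      exact inf_key (pev x Q)
    rw [hbase]
    exact (con_pev_zero Q).compl
  by_cases h0 : (0 : Polynomial (MvPolynomial ι ℤ)) ∈ Ps
  · have hperm : Ps.Perm (0 :: Ps.erase 0) := List.perm_cons_erase h0
    have hTeq : Tset Ps Q = Tset (Ps.erase 0) Q := by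
      ext x
      constructor <;> rintro ⟨y, h1, h2⟩
      · exact ⟨y, fun P hP => h1 P (List.mem_of_mem_erase hP), h2⟩
      · refine ⟨y, fun P hP => ?_, h2⟩
        rcases List.mem_cons.1 (hperm.mem_iff.1 hP) with rfl | hP'
        · simp
        · exact h1 P hP'
    have hμ0 : μ (0 : Polynomial (MvPolynomial ι ℤ)) = 0 := by rw [μ]; simp
    have hνlt : ν (Ps.erase 0) < ν Ps := by
      have h3 := ν_perm hperm
      rw [ν_cons, hμ0] at h3
      omega
    rw [hTeq]
    exact ih (ν (Ps.erase 0)) (by omega) _ Q le_rfl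
  · obtain ⟨P₁, hP₁mem, hP₁min⟩ := exists_min_natDegree Ps hPs
    have hP₁0 : P₁ ≠ 0 := fun h => h0 (h ▸ hP₁mem)
    have hμP₁ : μ P₁ = P₁.natDegree + 1 := by rw [μ]; simp [hP₁0]
    have hperm : Ps.Perm (P₁ :: Ps.erase P₁) := List.perm_cons_erase hP₁mem
    have hTeq : Tset Ps Q = Tset (P₁ :: Ps.erase P₁) Q :=
      Tset_congr (fun p => hperm.mem_iff) Q
    have hνeq : ν Ps = ν (P₁ :: Ps.erase P₁) := ν_perm hperm
    rw [hTeq]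
    set rest := Ps.erase P₁ with hrest
    set c := P₁.leadingCoeff with hc
    have hsplit : Tset (P₁ :: rest) Q =
        (Tset (P₁ :: rest) Q ∩ ZSet c) ∪ (Tset (P₁ :: rest) Q ∩ (ZSet c)ᶜ) := by
      rw [← Set.inter_union_distrib_left, Set.union_compl_self, Set.inter_univ]
    rw [hsplit]
    apply Con.union
    · -- erase the leading coefficient of `P₁`
      have hA : Tset (P₁ :: rest) Q ∩ ZSet c = Tset (P₁.eraseLead :: rest) Q ∩ ZSet c := by
        ext x
        simp only [Set.mem_inter_iff, ZSet, Set.mem_setOf_eq]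
        constructor <;> rintro ⟨⟨y, h1, h2⟩, hcx⟩ <;> refine ⟨⟨y, ?_, h2⟩, hcx⟩ <;>
          intro P hP
        · rcases List.mem_cons.1 hP with h | hP'
          · rw [h, ← pev_eraseLead x P₁ hcx]
            exact h1 P₁ (List.mem_cons_self)
          · exact h1 P (List.mem_cons_of_mem _ hP')
        · rcases List.mem_cons.1 hP with h | hP'
          · rw [h, pev_eraseLead x P₁ hcx]
            exact h1 P₁.eraseLead (List.mem_cons_self)
          · exact h1 P (List.mem_cons_of_mem _ hP')
      rw [hA]
      have hν' : ν (P₁.eraseLead :: rest) < N := by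
        have h3 := μ_eraseLead_lt hP₁0
        rw [ν_cons] at hνeq
        rw [ν_cons]
        omega
      exact (ih _ hν' _ Q le_rfl).inter (con_zset c)
    · by_cases hd : P₁.natDegree = 0
      · -- the first equation is a nonzero constant, so no solutions
        have hB : Tset (P₁ :: rest) Q ∩ (ZSet c)ᶜ = (∅ : Set (ι → ℂ)) := by
          rw [Set.eq_empty_iff_forall_notMem]
          rintro x ⟨⟨y, h1, _⟩, hcx⟩
          obtain ⟨a, ha⟩ := Polynomial.natDegree_eq_zero.1 hd
          have hla : c = a := by rw [hc, ← ha]; simp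
          have h3 := h1 P₁ (List.mem_cons_self)
          rw [← ha] at h3
          simp only [pev_C, Polynomial.eval_C] at h3
          rw [← hla] at h3
          exact hcx h3
        rw [hB]
        exact con_empty
      · rcases hrest' : rest with _ | ⟨P₂, rest'⟩
        · -- a single equation: use the algebraically closed field condition
          obtain ⟨W, hWc, hW⟩ := conD P₁ (μ (Q ^ P₁.natDegree)) (Q ^ P₁.natDegree) le_rfl
          have hB : Tset [P₁] Q ∩ (ZSet c)ᶜ = Wᶜ ∩ (ZSet c)ᶜ := by
            ext x
            simp only [Set.mem_inter_iff, Set.mem_compl_iff, ZSet, Set.mem_setOf_eq, Tset,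
              List.mem_singleton, forall_eq]
            constructor <;> rintro ⟨h1, hcx⟩ <;> refine ⟨?_, hcx⟩ <;>
              have hdeg : (pev x P₁).natDegree = P₁.natDegree := (pev_P_ne_zero hcx).2
            · have hkey := (acf_key (pev x P₁) (pev x Q)
                (by rw [hdeg]; exact Nat.pos_of_ne_zero hd)).1 h1
              rw [hdeg] at hkey
              rw [hW x hcx, pev_pow]
              exact hkey
            · rw [hW x hcx, pev_pow, ← hdeg] at h1
              exact (acf_key (pev x P₁) (pev x Q)
                (by rw [hdeg]; exact Nat.pos_of_ne_zero hd)).2 h1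
          rw [hB]
          exact hWc.compl.inter (con_zset c).compl
        · -- at least two equations: reduce `P₂` using `P₁`
          have hP₂Ps : P₂ ∈ Ps := by
            apply List.mem_of_mem_erase
            rw [← hrest, hrest']
            exact List.mem_cons_self
          have hP₂0 : P₂ ≠ 0 := fun h => h0 (h ▸ hP₂Ps)
          have hdle : P₁.natDegree ≤ P₂.natDegree := hP₁min P₂ hP₂Ps
          have hd₂pos : 0 < P₂.natDegree :=
            lt_of_lt_of_le (Nat.pos_of_ne_zero hd) hdle
          have hB : Tset (P₁ :: P₂ :: rest') Q ∩ (ZSet c)ᶜ =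
              Tset (P₁ :: red P₁ P₂ :: rest') Q ∩ (ZSet c)ᶜ := by
            ext x
            simp only [Set.mem_inter_iff, Set.mem_compl_iff, ZSet, Set.mem_setOf_eq, Tset,
              List.forall_mem_cons]
            constructor <;> rintro ⟨⟨y, ⟨hy1, hy2, hy3⟩, hyq⟩, hcx⟩ <;>
              refine ⟨⟨y, ⟨hy1, ?_, hy3⟩, hyq⟩, hcx⟩
            · exact (red_eval_equiv x P₁ P₂ y hcx hy1).1 hy2
            · exact (red_eval_equiv x P₁ P₂ y hcx hy1).2 hy2
          rw [hB]
          have hν' : ν (P₁ :: red P₁ P₂ :: rest') < N := by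
            have hμ₂ : μ P₂ = P₂.natDegree + 1 := by rw [μ]; simp [hP₂0]
            have hr : μ (red P₁ P₂) ≤ P₂.natDegree :=
              μ_le_of_natDegree_le (red_zero_or_natDegree_lt P₁ P₂ hdle hd₂pos)
            rw [ν_cons] at hνeq
            rw [hrest'] at hνeq
            rw [ν_cons] at hνeq
            rw [ν_cons, ν_cons]
            omega
          exact (ih _ hν' _ Q le_rfl).inter (con_zset c).compl

lemma aeval_option (x : ι → ℂ) (y : ℂ) (p : MvPolynomial (Option ι) ℤ) :
    MvPolynomial.aeval (fun o : Option ι => o.elim y x) p =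
      Polynomial.eval y (pev x (MvPolynomial.optionEquivLeft ℤ ι p)) := by
  induction p using MvPolynomial.induction_on with
  | C a =>
      simp only [MvPolynomial.optionEquivLeft_C, pev_C, Polynomial.eval_C, MvPolynomial.aeval_C]
  | add p q hp hq =>
      simp only [map_add, pev_add, Polynomial.eval_add, hp, hq]
  | mul_X p i hp =>
      cases i with
      | none =>
          simp only [map_mul, MvPolynomial.optionEquivLeft_X_none, pev_mul, pev_X,
            Polynomial.eval_mul, Polynomial.eval_X, hp, MvPolynomial.aeval_X]
          rfl
      | some i =>
          simp only [map_mul, MvPolynomial.optionEquivLeft_X_some, pev_mul, pev_C,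
            Polynomial.eval_mul, Polynomial.eval_C, hp, MvPolynomial.aeval_X]
          rfl

lemma con_proj_cell (l : List (MvPolynomial (Option ι) ℤ)) (q : MvPolynomial (Option ι) ℤ) :
    Con {x : ι → ℂ | ∃ y : ℂ, (fun o : Option ι => o.elim y x) ∈ cell l q} := by
  have h : {x : ι → ℂ | ∃ y : ℂ, (fun o : Option ι => o.elim y x) ∈ cell l q} =
      Tset (l.map (fun p => MvPolynomial.optionEquivLeft ℤ ι p))
        (MvPolynomial.optionEquivLeft ℤ ι q) := by
    ext x
    simp only [Set.mem_setOf_eq, cell, Tset, List.mem_map, aeval_option]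
    constructor <;> rintro ⟨y, h1, h2⟩ <;> refine ⟨y, ?_, h2⟩
    · rintro P ⟨p, hp, rfl⟩
      exact h1 p hp
    · intro p hp
      exact h1 _ ⟨p, hp, rfl⟩
  rw [h]
  exact conE _ _ _ le_rfl

lemma con_proj_ucells (L : List (List (MvPolynomial (Option ι) ℤ) × MvPolynomial (Option ι) ℤ)) :
    Con {x : ι → ℂ | ∃ y : ℂ, (fun o : Option ι => o.elim y x) ∈ ucells L} := by
  induction L with
  | nil => simpa using con_empty (ι := ι)
  | cons c L ih =>
      have h : {x : ι → ℂ | ∃ y : ℂ, (fun o : Option ι => o.elim y x) ∈ ucells (c :: L)} =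
          {x : ι → ℂ | ∃ y : ℂ, (fun o : Option ι => o.elim y x) ∈ cell c.1 c.2} ∪
          {x : ι → ℂ | ∃ y : ℂ, (fun o : Option ι => o.elim y x) ∈ ucells L} := by
        ext x
        simp only [ucells_cons, Set.mem_union, Set.mem_setOf_eq, Set.mem_union]
        constructor
        · rintro ⟨y, hy | hy⟩
          · exact Or.inl ⟨y, hy⟩
          · exact Or.inr ⟨y, hy⟩
        · rintro (⟨y, hy⟩ | ⟨y, hy⟩)
          · exact ⟨y, Or.inl hy⟩
          · exact ⟨y, Or.inr hy⟩
      rw [h]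
      exact (con_proj_cell c.1 c.2).union ih

lemma con_proj {S : Set (Option ι → ℂ)} (h : Con S) :
    Con {x : ι → ℂ | ∃ y : ℂ, (fun o : Option ι => o.elim y x) ∈ S} := by
  obtain ⟨L, rfl⟩ := h.exists_ucells
  exact con_proj_ucells L

lemma term_realize_poly {α : Type*} (t : Language.ring.Term α) :
    ∃ P : MvPolynomial α ℤ, ∀ v : α → ℂ, t.realize v = MvPolynomial.aeval v P := by
  induction t with
  | var i => exact ⟨MvPolynomial.X i, by simp⟩
  | func f ts ih =>
      choose Ps hPs using ih
      cases f with
      | add => exact ⟨Ps 0 + Ps 1, fun v => by rw [map_add, ← hPs, ← hPs]; rfl⟩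
      | mul => exact ⟨Ps 0 * Ps 1, fun v => by rw [map_mul, ← hPs, ← hPs]; rfl⟩
      | neg => exact ⟨-Ps 0, fun v => by rw [map_neg, ← hPs]; rfl⟩
      | zero => exact ⟨0, fun v => by rw [map_zero]; rfl⟩
      | one => exact ⟨1, fun v => by rw [map_one]; rfl⟩

lemma con_boundedFormula (n : ℕ) :
    ∀ (m : ℕ) (φ : Language.ring.BoundedFormula (Fin n) m),
    Con {z : Fin n ⊕ Fin m → ℂ | φ.Realize (z ∘ Sum.inl) (z ∘ Sum.inr)} := by
  intro m φ
  induction φ with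
  | @falsum m =>
      have h : {z : Fin n ⊕ Fin m → ℂ |
          (BoundedFormula.falsum : Language.ring.BoundedFormula (Fin n) m).Realize
            (z ∘ Sum.inl) (z ∘ Sum.inr)} = (∅ : Set _) := by
        ext z; simp [BoundedFormula.Realize]
      rw [h]; exact con_empty
  | @equal m t₁ t₂ =>
      obtain ⟨P₁, h₁⟩ := term_realize_poly t₁
      obtain ⟨P₂, h₂⟩ := term_realize_poly t₂
      have h : {z : Fin n ⊕ Fin m → ℂ |
          (BoundedFormula.equal t₁ t₂).Realize (z ∘ Sum.inl) (z ∘ Sum.inr)} =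
          ZSet (P₁ - P₂) := by
        ext z
        have helim : Sum.elim (z ∘ Sum.inl) (z ∘ Sum.inr) = z := by
          funext s; cases s <;> rfl
        simp only [Set.mem_setOf_eq, BoundedFormula.Realize, ZSet, helim, h₁, h₂,
          map_sub, sub_eq_zero]
      rw [h]; exact con_zset _
  | rel r ts => exact isEmptyElim r
  | @imp m φ ψ ihφ ihψ =>
      have h : {z : Fin n ⊕ Fin m → ℂ |
          (φ.imp ψ).Realize (z ∘ Sum.inl) (z ∘ Sum.inr)} =
          {z | φ.Realize (z ∘ Sum.inl) (z ∘ Sum.inr)}ᶜ ∪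
          {z | ψ.Realize (z ∘ Sum.inl) (z ∘ Sum.inr)} := by
        ext z
        simp only [Set.mem_setOf_eq, BoundedFormula.realize_imp, Set.mem_union,
          Set.mem_compl_iff, Set.mem_setOf_eq]
        tauto
      rw [h]; exact ihφ.compl.union ihψ
  | @all m φ ihφ =>
      set g : Fin n ⊕ Fin (m + 1) → MvPolynomial (Option (Fin n ⊕ Fin m)) ℤ :=
        Sum.elim (fun i => MvPolynomial.X (some (Sum.inl i)))
          (fun j => Fin.lastCases (MvPolynomial.X none)
            (fun j' => MvPolynomial.X (some (Sum.inr j'))) j) with hg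
      have hB := con_proj (con_pullback g
        (ihφ.compl :
          Con {w : Fin n ⊕ Fin (m + 1) → ℂ | φ.Realize (w ∘ Sum.inl) (w ∘ Sum.inr)}ᶜ))
      have hkey : ∀ (x : Fin n ⊕ Fin m → ℂ) (y : ℂ),
          (fun s => MvPolynomial.aeval (fun o : Option (Fin n ⊕ Fin m) => o.elim y x) (g s)) =
          Sum.elim (x ∘ Sum.inl) (Fin.snoc (x ∘ Sum.inr) y) := by
        intro x y
        funext s
        cases s with
        | inl i => simp [hg]
        | inr j =>
            refine Fin.lastCases ?_ ?_ j
            · simp [hg]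
            · intro j'
              simp [hg]
      have h : {z : Fin n ⊕ Fin m → ℂ | (φ.all).Realize (z ∘ Sum.inl) (z ∘ Sum.inr)} =
          {x : Fin n ⊕ Fin m → ℂ | ∃ y : ℂ, (fun o : Option (Fin n ⊕ Fin m) => o.elim y x) ∈
            ((fun (w : Option (Fin n ⊕ Fin m) → ℂ) (s : Fin n ⊕ Fin (m + 1)) =>
              MvPolynomial.aeval w (g s)) ⁻¹'
              {w : Fin n ⊕ Fin (m + 1) → ℂ | φ.Realize (w ∘ Sum.inl) (w ∘ Sum.inr)}ᶜ)}ᶜ := by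
        ext x
        simp only [Set.mem_setOf_eq, BoundedFormula.realize_all, Set.mem_compl_iff,
          Set.mem_preimage, hkey x, Sum.elim_comp_inl, Sum.elim_comp_inr, not_exists, not_not]
      rw [h]
      exact hB.compl

lemma con_of_definable {n : ℕ} {S : Set (Fin n → ℂ)}
    (h : (∅ : Set ℂ).Definable Language.ring S) : Con S := by
  obtain ⟨φ, rfl⟩ := Set.empty_definable_iff.1 h
  have h0 := con_boundedFormula n 0 φ
  have h1 := con_pullback (Sum.elim MvPolynomial.X Fin.elim0 :
      Fin n ⊕ Fin 0 → MvPolynomial (Fin n) ℤ) h0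
  have heq : (fun (x : Fin n → ℂ) (i : Fin n ⊕ Fin 0) =>
      MvPolynomial.aeval x ((Sum.elim MvPolynomial.X Fin.elim0 :
        Fin n ⊕ Fin 0 → MvPolynomial (Fin n) ℤ) i)) ⁻¹'
      {z | BoundedFormula.Realize φ (z ∘ Sum.inl) (z ∘ Sum.inr)} = setOf φ.Realize := by
    ext x
    simp only [Set.mem_preimage, Set.mem_setOf_eq]
    have hl : ((fun i => MvPolynomial.aeval x ((Sum.elim MvPolynomial.X Fin.elim0 :
        Fin n ⊕ Fin 0 → MvPolynomial (Fin n) ℤ) i)) ∘ Sum.inl) = x := by funext i; simp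
    rw [hl]
    show BoundedFormula.Realize φ x _ ↔ Formula.Realize φ x
    unfold Formula.Realize
    exact iff_of_eq (congrArg _ (Subsingleton.elim _ _))
  rwa [heq] at h1

lemma definable_of_con {n : ℕ} {S : Set (Fin n → ℂ)} (h : Con S) :
    (∅ : Set ℂ).Definable Language.ring S := by
  induction h with
  | @basic s hs =>
      obtain ⟨P, rfl⟩ := hs
      rw [Set.empty_definable_iff]
      refine ⟨Term.equal (FirstOrder.Ring.termOfFreeCommRing
        (MvPolynomial.eval₂Hom (Int.castRingHom (FreeCommRing (Fin n)))
          FreeCommRing.of P)) 0, ?_⟩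
      ext x
      have hlift : FreeCommRing.lift x (MvPolynomial.eval₂Hom
          (Int.castRingHom (FreeCommRing (Fin n))) FreeCommRing.of P) =
          MvPolynomial.aeval x P := by
        have hh : (FreeCommRing.lift x).comp (MvPolynomial.eval₂Hom
            (Int.castRingHom (FreeCommRing (Fin n))) FreeCommRing.of) =
            ((MvPolynomial.aeval x : MvPolynomial (Fin n) ℤ →ₐ[ℤ] ℂ) :
              MvPolynomial (Fin n) ℤ →+* ℂ) := by
          apply MvPolynomial.ringHom_ext
          · intro r; simp
          · intro i; simp
        exact RingHom.congr_fun hh P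
      simp only [Set.mem_setOf_eq, Formula.realize_equal,
        FirstOrder.Ring.realize_termOfFreeCommRing, FirstOrder.Ring.realize_zero, hlift]
  | univ => exact Set.definable_univ
  | compl _ ih => exact ih.compl
  | union _ _ ih₁ ih₂ => exact ih₁.union ih₂

end QEproof

/-- A set `S` of `n`-tuples of complex numbers is definable without parameters in the
language of rings if and only if it belongs to the Boolean algebra of subsets of
`Fin n → ℂ` generated by the zero sets of polynomials with integer coefficients, i.e. iff
it is constructible over the prime field. -/
theorem definable_iff_constructible (n : ℕ) (S : Set (Fin n → ℂ)) :
    (∅ : Set ℂ).Definable FirstOrder.Language.ring S ↔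
      MemBooleanAlgebraGen
        {t : Set (Fin n → ℂ) | ∃ P : MvPolynomial (Fin n) ℤ,
          t = {x | MvPolynomial.aeval x P = 0}} S := by
  constructor
  · exact QEproof.con_of_definable
  · exact QEproof.definable_of_con
end

section
/- Let K be a field and V an infinite-dimensional K-vector space. For tuples a, b : Fin n → V, there exists a K-linear automorphism g : V ≃ₗ[K] V with g (a i) = b i for every i if and only if a and b satisfy exactly the same K-linear relations, i.e. for every c : Fin n → K one has ∑ i, c i • a i = 0 if and only if ∑ i, c i • b i = 0. (The orbits of the diagonal action of GL(V) on Vⁿ are determined by the linear relations among the coordinates.) -/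
open Cardinal

/-- Extend a linear equivalence between two submodules whose quotients have equal rank
to an automorphism of the whole space. -/
lemma extend_linearEquiv_of_quot_rank_eq
    {K : Type u} {V : Type v} [Field K] [AddCommGroup V] [Module K V]
    (W₁ W₂ : Submodule K V) (e : W₁ ≃ₗ[K] W₂)
    (h : Module.rank K (V ⧸ W₁) = Module.rank K (V ⧸ W₂)) :
    ∃ g : V ≃ₗ[K] V, ∀ x : W₁, g x = e x := by
  obtain ⟨C₁, hC₁⟩ := Submodule.exists_isCompl W₁
  obtain ⟨C₂, hC₂⟩ := Submodule.exists_isCompl W₂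
  have e₁ : (V ⧸ W₁) ≃ₗ[K] C₁ := Submodule.quotientEquivOfIsCompl W₁ C₁ hC₁
  have e₂ : (V ⧸ W₂) ≃ₗ[K] C₂ := Submodule.quotientEquivOfIsCompl W₂ C₂ hC₂
  have hq : Nonempty ((V ⧸ W₁) ≃ₗ[K] (V ⧸ W₂)) := nonempty_linearEquiv_of_rank_eq h
  obtain ⟨eq⟩ := hq
  let e' : C₁ ≃ₗ[K] C₂ := e₁.symm.trans (eq.trans e₂)
  refine ⟨((Submodule.prodEquivOfIsCompl W₁ C₁ hC₁).symm.trans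
      (e.prodCongr e')).trans (Submodule.prodEquivOfIsCompl W₂ C₂ hC₂), fun x => ?_⟩
  simp [Submodule.prodEquivOfIsCompl_symm_apply_left, Submodule.coe_prodEquivOfIsCompl',
    LinearEquiv.prodCongr_apply]

/-- Let `V` be an infinite-dimensional vector space over a field `K`. Two `n`-tuples of
vectors are in the same orbit of the diagonal action of `GL(V)` if and only if they
satisfy exactly the same `K`-linear relations: there is a linear automorphism `g` of `V`
with `g (a i) = b i` for all `i` iff for every `c : Fin n → K`, `∑ i, c i • a i = 0` iff
`∑ i, c i • b i = 0`. -/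
theorem exists_linearEquiv_map_eq_iff_same_linear_relations
    (K : Type u) (V : Type v) [Field K] [AddCommGroup V] [Module K V]
    (hV : ℵ₀ ≤ Module.rank K V) (n : ℕ) (a b : Fin n → V) :
    (∃ g : V ≃ₗ[K] V, ∀ i, g (a i) = b i) ↔
      ∀ c : Fin n → K, (∑ i, c i • a i = 0 ↔ ∑ i, c i • b i = 0) := by
  constructor
  · rintro ⟨g, hg⟩ c
    constructor
    · intro h
      have := congrArg g h
      simpa [map_sum, hg] using this
    · intro h
      have := congrArg g.symm h
      simp only [map_sum, map_smul, map_zero] at this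
      simpa [fun i => (g.symm_apply_eq).mpr (hg i).symm] using this
  · intro hrel
    set φ : (Fin n → K) →ₗ[K] V := Fintype.linearCombination K a with hφ
    set ψ : (Fin n → K) →ₗ[K] V := Fintype.linearCombination K b with hψ
    have hker : LinearMap.ker φ = LinearMap.ker ψ := by
      ext c
      simp only [LinearMap.mem_ker, hφ, hψ, Fintype.linearCombination_apply]
      exact hrel c
    -- equivalence between ranges
    let e : LinearMap.range φ ≃ₗ[K] LinearMap.range ψ :=
      (φ.quotKerEquivRange.symm.trans
        (Submodule.quotEquivOfEq _ _ hker)).trans ψ.quotKerEquivRange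
    have he : ∀ c : Fin n → K, (e ⟨φ c, LinearMap.mem_range_self φ c⟩ : V) = ψ c := by
      intro c
      have h1 : φ.quotKerEquivRange (Submodule.Quotient.mk c) =
          ⟨φ c, LinearMap.mem_range_self φ c⟩ := by
        apply Subtype.ext
        simp [LinearMap.quotKerEquivRange]
      have h1' : (φ.quotKerEquivRange).symm ⟨φ c, LinearMap.mem_range_self φ c⟩ =
          Submodule.Quotient.mk c := by rw [← h1, LinearEquiv.symm_apply_apply]
      have h2 : (Submodule.quotEquivOfEq _ _ hker) (Submodule.Quotient.mk c) =
          Submodule.Quotient.mk c := rfl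
      have h3 : (ψ.quotKerEquivRange (Submodule.Quotient.mk c) : V) = ψ c := by
        simp [LinearMap.quotKerEquivRange]
      simp only [e, LinearEquiv.trans_apply, h1', h2, h3]
    -- ranks of quotients
    have hrng : ∀ v : Fin n → V,
        Module.rank K (LinearMap.range (Fintype.linearCombination K v)) < ℵ₀ := by
      intro v
      rw [Fintype.range_linearCombination]
      calc Module.rank K (Submodule.span K (Set.range v)) ≤ #(Set.range v) :=
            rank_span_le _
        _ < ℵ₀ := (Set.finite_range v).lt_aleph0
    have hfr₁ : Module.rank K (LinearMap.range φ) < ℵ₀ := hrng a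
    have hfr₂ : Module.rank K (LinearMap.range ψ) < ℵ₀ := hrng b
    have hquot : ∀ (W : Submodule K V), Module.rank K W < ℵ₀ →
        Module.rank K (V ⧸ W) = Module.rank K V := by
      intro W hW
      have hsum := Submodule.rank_quotient_add_rank W
      have hinf : ℵ₀ ≤ Module.rank K (V ⧸ W) := by
        by_contra hlt
        push_neg at hlt
        have : Module.rank K V < ℵ₀ := by
          rw [← hsum]; exact add_lt_aleph0 hlt hW
        exact absurd hV (not_le.mpr this)
      rw [← hsum]
      exact (add_eq_left hinf (le_trans hW.le hinf)).symm
    have hq : Module.rank K (V ⧸ LinearMap.range φ) =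
        Module.rank K (V ⧸ LinearMap.range ψ) := by
      rw [hquot _ hfr₁, hquot _ hfr₂]
    obtain ⟨g, hg⟩ := extend_linearEquiv_of_quot_rank_eq _ _ e hq
    refine ⟨g, fun i => ?_⟩
    have ha : a i = φ (Pi.single i 1) := by
      simp [hφ, Fintype.linearCombination_apply, Pi.single_apply]
    have hb : b i = ψ (Pi.single i 1) := by
      simp [hψ, Fintype.linearCombination_apply, Pi.single_apply]
    have := hg ⟨φ (Pi.single i 1), LinearMap.mem_range_self φ _⟩
    rw [he] at this
    rw [ha, hb]
    exact this
end
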